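/- Let Q = ∏_{j=1}^d I_j be a box in ℝ^d (each I_j a nonempty bounded open interval) and E = ∏_{j=1}^d J_j with J_j ⊂ I_j measurable of positive measure. Suppose for each j there is a constant κ_j ∈ (0,1] such that every univariate exponential sum with frequencies in a fixed finite set Z_j ⊂ ℝ satisfies (⨍_{J_j} |h|^p)^{1/p} ≥ κ_j (⨍_{I_j} |h|^p)^{1/p}. Then every f(x) = ∑_{k ∈ ∏_j Z_j} c_k e^{ik·x} satisfies (⨍_E |f|^p)^{1/p} ≥ (∏_{j=1}^d κ_j) (⨍_Q |f|^p)^{1/p}. -/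

import Mathlib

open MeasureTheory Complex

open scoped ENNReal

section NTaux

lemma myPiRestrict {n : ℕ} (μ : Fin n → Measure ℝ) [∀ i, SigmaFinite (μ i)]
    (s : Fin n → Set ℝ) (hs : ∀ i, MeasurableSet (s i)) :
    (Measure.pi μ).restrict (Set.univ.pi s) = Measure.pi (fun i => (μ i).restrict (s i)) := by
  refine (Measure.pi_eq (μ := fun i => (μ i).restrict (s i)) fun t ht => ?_).symm
  rw [Measure.restrict_apply (MeasurableSet.univ_pi ht), ← Set.pi_inter_distrib,
    Measure.pi_pi]
  exact Finset.prod_congr rfl fun i _ => (Measure.restrict_apply (ht i)).symm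

lemma mySumSplit {n : ℕ} (Z : Fin (n+1) → Finset ℝ) (g : (Fin (n+1) → ℝ) → ℂ) :
    ∑ k ∈ Fintype.piFinset Z, g k
      = ∑ z ∈ Z 0, ∑ k' ∈ Fintype.piFinset (fun j => Z j.succ), g (Fin.cons z k') := by
  rw [← Finset.sum_product']
  refine Finset.sum_nbij' (fun k => (k 0, fun j => k j.succ)) (fun zk => Fin.cons zk.1 zk.2)
    ?_ ?_ ?_ ?_ ?_
  · intro k hk
    simp only [Fintype.mem_piFinset] at hk
    simp only [Finset.mem_product, Fintype.mem_piFinset]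
    exact ⟨hk 0, fun j => hk j.succ⟩
  · intro zk hzk
    simp only [Finset.mem_product, Fintype.mem_piFinset] at hzk
    simp only [Fintype.mem_piFinset]
    intro j
    refine Fin.cases ?_ ?_ j
    · simpa using hzk.1
    · intro i; simpa using hzk.2 i
  · intro k hk
    funext j
    refine Fin.cases rfl (fun i => rfl) j
  · intro zk hzk
    simp
  · intro k hk
    congr 1
    funext j
    refine Fin.cases rfl (fun i => rfl) j

lemma mySlice {n : ℕ} (S : Fin (n+1) → Set ℝ) (hS : ∀ j, MeasurableSet (S j))
    (G : (Fin (n+1) → ℝ) → ℝ≥0∞) (hG : Measurable G) :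
    ∫⁻ x in Set.univ.pi S, G x
      = ∫⁻ t in S 0, ∫⁻ y in Set.univ.pi (fun j => S j.succ), G (Fin.cons t y) := by
  have hres : (volume : Measure (Fin (n+1) → ℝ)).restrict (Set.univ.pi S)
      = Measure.pi (fun j => volume.restrict (S j)) := by
    rw [volume_pi]; exact myPiRestrict _ _ hS
  have hres' : (volume : Measure (Fin n → ℝ)).restrict (Set.univ.pi (fun j => S j.succ))
      = Measure.pi (fun j => volume.restrict (S j.succ)) := by
    rw [volume_pi]; exact myPiRestrict _ _ (fun j => hS j.succ)
  set e := MeasurableEquiv.piFinSuccAbove (fun _ : Fin (n+1) => ℝ) 0 with he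
  have mp := measurePreserving_piFinSuccAbove (fun j : Fin (n+1) => volume.restrict (S j)) 0
  have hcomp := mp.lintegral_comp (f := G ∘ e.symm) (hG.comp e.symm.measurable)
  have h1 : ∀ a : Fin (n+1) → ℝ, (G ∘ e.symm) (e a) = G a := by
    intro a; simp
  rw [hres]
  calc ∫⁻ x, G x ∂(Measure.pi fun j => volume.restrict (S j))
      = ∫⁻ x, (G ∘ e.symm) (e x) ∂(Measure.pi fun j => volume.restrict (S j)) := by
        exact (lintegral_congr h1).symm
    _ = ∫⁻ z, (G ∘ e.symm) z
          ∂((volume.restrict (S 0)).prod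
            (Measure.pi fun j => volume.restrict (S ((0:Fin (n+1)).succAbove j)))) := hcomp
    _ = ∫⁻ t, ∫⁻ y, (G ∘ e.symm) (t, y)
          ∂(Measure.pi fun j => volume.restrict (S j.succ)) ∂(volume.restrict (S 0)) := by
        rw [show (fun j : Fin n => volume.restrict (S ((0:Fin (n+1)).succAbove j)))
            = fun j => volume.restrict (S j.succ) by
          funext j; rw [Fin.succAbove_zero]]
        exact lintegral_prod _ ((hG.comp e.symm.measurable).aemeasurable)
    _ = ∫⁻ t in S 0, ∫⁻ y in Set.univ.pi (fun j => S j.succ), G (Fin.cons t y) := by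
        rw [hres']
        refine lintegral_congr fun t => lintegral_congr fun y => ?_
        simp only [Function.comp_apply, he, MeasurableEquiv.piFinSuccAbove]
        congr 1
        exact Fin.insertNth_zero' t y

lemma myToENN {α : Type*} [MeasurableSpace α] {μ : Measure α} {s t : Set α} {f : α → ℝ}
    {p κ : ℝ} (hp : 0 < p) (hκ : 0 < κ)
    (hf0 : ∀ x, 0 ≤ f x)
    (hfs : AEStronglyMeasurable f (μ.restrict s)) (hft : AEStronglyMeasurable f (μ.restrict t))
    (hs0 : μ s ≠ 0) (hs : μ s ≠ ⊤) (ht0 : μ t ≠ 0) (ht : μ t ≠ ⊤)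
    (hLs : ∫⁻ x in s, ENNReal.ofReal (f x) ∂μ ≠ ⊤)
    (hLt : ∫⁻ x in t, ENNReal.ofReal (f x) ∂μ ≠ ⊤)
    (h : κ * (⨍ x in s, f x ∂μ) ^ (1/p) ≤ (⨍ x in t, f x ∂μ) ^ (1/p)) :
    ENNReal.ofReal (κ ^ p) * μ t * ∫⁻ x in s, ENNReal.ofReal (f x) ∂μ
      ≤ μ s * ∫⁻ x in t, ENNReal.ofReal (f x) ∂μ := by
  set Ls := ∫⁻ x in s, ENNReal.ofReal (f x) ∂μ with hLs'
  set Lt := ∫⁻ x in t, ENNReal.ofReal (f x) ∂μ with hLt'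
  have havgs : ⨍ x in s, f x ∂μ = (μ s).toReal⁻¹ * Ls.toReal := by
    rw [setAverage_eq, smul_eq_mul,
      integral_eq_lintegral_of_nonneg_ae (ae_of_all _ hf0) hfs, measureReal_def]
  have havgt : ⨍ x in t, f x ∂μ = (μ t).toReal⁻¹ * Lt.toReal := by
    rw [setAverage_eq, smul_eq_mul,
      integral_eq_lintegral_of_nonneg_ae (ae_of_all _ hf0) hft, measureReal_def]
  have hAs : 0 < (μ s).toReal := ENNReal.toReal_pos hs0 hs
  have hBt : 0 < (μ t).toReal := ENNReal.toReal_pos ht0 ht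
  have h0s : 0 ≤ ⨍ x in s, f x ∂μ := by rw [havgs]; positivity
  have h0t : 0 ≤ ⨍ x in t, f x ∂μ := by rw [havgt]; positivity
  have hstep : κ ^ p * (⨍ x in s, f x ∂μ) ≤ ⨍ x in t, f x ∂μ := by
    have h2 := Real.rpow_le_rpow (by positivity) h hp.le
    rwa [Real.mul_rpow hκ.le (Real.rpow_nonneg h0s _), one_div,
      Real.rpow_inv_rpow h0s hp.ne', Real.rpow_inv_rpow h0t hp.ne'] at h2
  have key : κ ^ p * ((μ t).toReal * Ls.toReal) ≤ (μ s).toReal * Lt.toReal := by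
    rw [havgs, havgt,
      show κ ^ p * ((μ s).toReal⁻¹ * Ls.toReal) = κ ^ p * Ls.toReal / (μ s).toReal from by ring,
      show (μ t).toReal⁻¹ * Lt.toReal = Lt.toReal / (μ t).toReal from by ring,
      div_le_div_iff₀ hAs hBt] at hstep
    linear_combination hstep
  have h3 := ENNReal.ofReal_le_ofReal key
  rw [ENNReal.ofReal_mul (by positivity), ENNReal.ofReal_mul ENNReal.toReal_nonneg,
    ENNReal.ofReal_mul ENNReal.toReal_nonneg, ENNReal.ofReal_toReal ht,
    ENNReal.ofReal_toReal hLs, ENNReal.ofReal_toReal hs, ENNReal.ofReal_toReal hLt] at h3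
  rwa [mul_assoc]

lemma myFromENN {α : Type*} [MeasurableSpace α] {μ : Measure α} {s t : Set α} {f : α → ℝ}
    {p κ : ℝ} (hp : 0 < p) (hκ : 0 < κ)
    (hf0 : ∀ x, 0 ≤ f x)
    (hfs : AEStronglyMeasurable f (μ.restrict s)) (hft : AEStronglyMeasurable f (μ.restrict t))
    (hs0 : μ s ≠ 0) (hs : μ s ≠ ⊤) (ht0 : μ t ≠ 0) (ht : μ t ≠ ⊤)
    (hLt : ∫⁻ x in t, ENNReal.ofReal (f x) ∂μ ≠ ⊤)
    (h : ENNReal.ofReal (κ ^ p) * μ t * ∫⁻ x in s, ENNReal.ofReal (f x) ∂μ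
      ≤ μ s * ∫⁻ x in t, ENNReal.ofReal (f x) ∂μ) :
    κ * (⨍ x in s, f x ∂μ) ^ (1/p) ≤ (⨍ x in t, f x ∂μ) ^ (1/p) := by
  set Ls := ∫⁻ x in s, ENNReal.ofReal (f x) ∂μ with hLs'
  set Lt := ∫⁻ x in t, ENNReal.ofReal (f x) ∂μ with hLt'
  have havgs : ⨍ x in s, f x ∂μ = (μ s).toReal⁻¹ * Ls.toReal := by
    rw [setAverage_eq, smul_eq_mul,
      integral_eq_lintegral_of_nonneg_ae (ae_of_all _ hf0) hfs, measureReal_def]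
  have havgt : ⨍ x in t, f x ∂μ = (μ t).toReal⁻¹ * Lt.toReal := by
    rw [setAverage_eq, smul_eq_mul,
      integral_eq_lintegral_of_nonneg_ae (ae_of_all _ hf0) hft, measureReal_def]
  have hAs : 0 < (μ s).toReal := ENNReal.toReal_pos hs0 hs
  have hBt : 0 < (μ t).toReal := ENNReal.toReal_pos ht0 ht
  have hfin : μ s * Lt ≠ ⊤ := ENNReal.mul_ne_top hs hLt
  have hr := ENNReal.toReal_mono hfin h
  rw [ENNReal.toReal_mul, ENNReal.toReal_mul, ENNReal.toReal_mul,
    ENNReal.toReal_ofReal (by positivity)] at hr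
  have hstep : κ ^ p * (⨍ x in s, f x ∂μ) ≤ ⨍ x in t, f x ∂μ := by
    rw [havgs, havgt,
      show κ ^ p * ((μ s).toReal⁻¹ * Ls.toReal) = κ ^ p * Ls.toReal / (μ s).toReal from by ring,
      show (μ t).toReal⁻¹ * Lt.toReal = Lt.toReal / (μ t).toReal from by ring,
      div_le_div_iff₀ hAs hBt]
    linear_combination hr
  have h0s : 0 ≤ ⨍ x in s, f x ∂μ := by rw [havgs]; positivity
  calc κ * (⨍ x in s, f x ∂μ) ^ (1/p)
      = (κ ^ p * (⨍ x in s, f x ∂μ)) ^ (1/p) := by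
        rw [Real.mul_rpow (by positivity) h0s, one_div, Real.rpow_rpow_inv hκ.le hp.ne']
    _ ≤ (⨍ x in t, f x ∂μ) ^ (1/p) :=
        Real.rpow_le_rpow (by positivity) hstep (by positivity)

lemma myFinGen {E : Type*} [MeasureSpace E] [TopologicalSpace E]
    {K S : Set E} (hK : IsCompact K) (hKfin : volume K ≠ ⊤) (hSK : S ⊆ K)
    (hSm : MeasurableSet S) {F : E → ℝ} (hF : Continuous F) :
    ∫⁻ x in S, ENNReal.ofReal (F x) ≠ ⊤ := by
  obtain ⟨C, hC⟩ := hK.exists_bound_of_continuousOn hF.continuousOn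
  have hb : ∫⁻ x in S, ENNReal.ofReal (F x) ≤ ∫⁻ _x in S, ENNReal.ofReal C := by
    refine lintegral_mono_ae ((ae_restrict_iff' hSm).2 (ae_of_all _ fun x hx => ?_))
    exact ENNReal.ofReal_le_ofReal ((Real.le_norm_self _).trans (hC x (hSK hx)))
  have hc : ∫⁻ _x in S, (ENNReal.ofReal C : ℝ≥0∞) = ENNReal.ofReal C * volume S := by
    simp [lintegral_const, Measure.restrict_apply_univ]
  refine ne_top_of_le_ne_top ?_ (hb.trans_eq hc)
  exact ENNReal.mul_ne_top ENNReal.ofReal_ne_top (ne_top_of_le_ne_top hKfin (measure_mono hSK))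

lemma myCont {m : ℕ} (Z : Fin m → Finset ℝ) (c : (Fin m → ℝ) → ℂ) {p : ℝ} (hp : 0 < p) :
    Continuous fun x : Fin m → ℝ =>
      ‖∑ k ∈ Fintype.piFinset Z, c k * Complex.exp (Complex.I * ((∑ j, k j * x j : ℝ) : ℂ))‖ ^ p := by
  refine Continuous.rpow_const ?_ (fun x => Or.inr hp.le)
  refine Continuous.norm (continuous_finset_sum _ fun k _ => ?_)
  exact continuous_const.mul (Complex.continuous_exp.comp (continuous_const.mul
    (Complex.continuous_ofReal.comp
      (continuous_finset_sum _ fun j _ => continuous_const.mul (continuous_apply j)))))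

lemma myCont1 (Z : Finset ℝ) (bc : ℝ → ℂ) {p : ℝ} (hp : 0 < p) :
    Continuous fun t : ℝ =>
      ‖∑ z ∈ Z, bc z * Complex.exp (Complex.I * (z : ℂ) * (t : ℂ))‖ ^ p := by
  refine Continuous.rpow_const ?_ (fun x => Or.inr hp.le)
  refine Continuous.norm (continuous_finset_sum _ fun z _ => ?_)
  exact continuous_const.mul (Complex.continuous_exp.comp
    (continuous_const.mul Complex.continuous_ofReal))

lemma myId1 {n : ℕ} (Z : Fin (n+1) → Finset ℝ) (c : (Fin (n+1) → ℝ) → ℂ) (t : ℝ)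
    (y : Fin n → ℝ) :
    ∑ k ∈ Fintype.piFinset Z, c k *
        Complex.exp (Complex.I * ((∑ j, k j * (Fin.cons t y : Fin (n+1) → ℝ) j : ℝ) : ℂ))
      = ∑ z ∈ Z 0, (∑ k' ∈ Fintype.piFinset (fun j => Z j.succ),
          c (Fin.cons z k') * Complex.exp (Complex.I * ((∑ j, k' j * y j : ℝ) : ℂ))) *
            Complex.exp (Complex.I * (z : ℂ) * (t : ℂ)) := by
  rw [mySumSplit]
  refine Finset.sum_congr rfl fun z _ => ?_
  rw [Finset.sum_mul]
  refine Finset.sum_congr rfl fun k' _ => ?_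
  have hsum : (∑ j, (Fin.cons z k' : Fin (n+1) → ℝ) j * (Fin.cons t y : Fin (n+1) → ℝ) j : ℝ)
      = z * t + ∑ j, k' j * y j := by
    rw [Fin.sum_univ_succ]; simp
  rw [hsum]
  push_cast
  rw [mul_add, Complex.exp_add]
  ring

lemma myId2 {n : ℕ} (Z : Fin (n+1) → Finset ℝ) (c : (Fin (n+1) → ℝ) → ℂ) (t : ℝ)
    (y : Fin n → ℝ) :
    ∑ k ∈ Fintype.piFinset Z, c k *
        Complex.exp (Complex.I * ((∑ j, k j * (Fin.cons t y : Fin (n+1) → ℝ) j : ℝ) : ℂ))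
      = ∑ k' ∈ Fintype.piFinset (fun j => Z j.succ),
          (∑ z ∈ Z 0, c (Fin.cons z k') * Complex.exp (Complex.I * (z : ℂ) * (t : ℂ))) *
            Complex.exp (Complex.I * ((∑ j, k' j * y j : ℝ) : ℂ)) := by
  rw [mySumSplit, Finset.sum_comm]
  refine Finset.sum_congr rfl fun k' _ => ?_
  rw [Finset.sum_mul]
  refine Finset.sum_congr rfl fun z _ => ?_
  have hsum : (∑ j, (Fin.cons z k' : Fin (n+1) → ℝ) j * (Fin.cons t y : Fin (n+1) → ℝ) j : ℝ)
      = z * t + ∑ j, k' j * y j := by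
    rw [Fin.sum_univ_succ]; simp
  rw [hsum]
  push_cast
  rw [mul_add, Complex.exp_add]
  ring

lemma myKey (p : ℝ) (hp : 0 < p) :
    ∀ (n : ℕ) (a b : Fin n → ℝ) (J : Fin n → Set ℝ) (Z : Fin n → Finset ℝ)
      (κ : Fin n → ℝ) (c : (Fin n → ℝ) → ℂ),
      (∀ j, MeasurableSet (J j)) → (∀ j, J j ⊆ Set.Ioo (a j) (b j)) → (∀ j, 0 < κ j) →
      (∀ j, ∀ bc : ℝ → ℂ,
        ENNReal.ofReal (κ j ^ p) * volume (J j) *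
            ∫⁻ t in Set.Ioo (a j) (b j),
              ENNReal.ofReal (‖∑ z ∈ Z j, bc z * Complex.exp (Complex.I * (z:ℂ) * (t:ℂ))‖ ^ p)
          ≤ volume (Set.Ioo (a j) (b j)) *
            ∫⁻ t in J j,
              ENNReal.ofReal (‖∑ z ∈ Z j, bc z * Complex.exp (Complex.I * (z:ℂ) * (t:ℂ))‖ ^ p)) →
      (∏ j, ENNReal.ofReal (κ j ^ p)) * (∏ j, volume (J j)) *
          ∫⁻ x in Set.univ.pi (fun j => Set.Ioo (a j) (b j)),
            ENNReal.ofReal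
              (‖∑ k ∈ Fintype.piFinset Z, c k *
                Complex.exp (Complex.I * ((∑ j, k j * x j : ℝ) : ℂ))‖ ^ p)
        ≤ (∏ j, volume (Set.Ioo (a j) (b j))) *
          ∫⁻ x in Set.univ.pi J,
            ENNReal.ofReal
              (‖∑ k ∈ Fintype.piFinset Z, c k *
                Complex.exp (Complex.I * ((∑ j, k j * x j : ℝ) : ℂ))‖ ^ p) := by
  intro n
  induction n with
  | zero =>
    intro a b J Z κ c hJm hJsub hκ h1
    have h0 : ∀ S : Fin 0 → Set ℝ, Set.univ.pi S = Set.univ := by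
      intro S; ext x; simp
    simp [h0]
  | succ n ih =>
    intro a b J Z κ c hJm hJsub hκ h1
    set G : (Fin (n+1) → ℝ) → ℝ≥0∞ := fun x =>
      ENNReal.ofReal
        (‖∑ k ∈ Fintype.piFinset Z, c k *
          Complex.exp (Complex.I * ((∑ j, k j * x j : ℝ) : ℂ))‖ ^ p) with hGdef
    have hGm : Measurable G := (myCont Z c hp).measurable.ennreal_ofReal
    have hconsm : Measurable fun z : ℝ × (Fin n → ℝ) => (Fin.cons z.1 z.2 : Fin (n+1) → ℝ) := by
      refine measurable_pi_iff.2 fun j => ?_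
      refine Fin.cases ?_ ?_ j
      · simpa using measurable_fst
      · intro i; simp only [Fin.cons_succ]; exact (measurable_pi_apply i).comp measurable_snd
    have hswap : ∀ (S0 : Set ℝ) (ST : Fin n → Set ℝ),
        ∫⁻ t in S0, ∫⁻ y in Set.univ.pi ST, G (Fin.cons t y)
          = ∫⁻ y in Set.univ.pi ST, ∫⁻ t in S0, G (Fin.cons t y) := fun S0 ST =>
      lintegral_lintegral_swap ((hGm.comp hconsm).aemeasurable)
    have hIooFin : ∀ (u v : ℝ), volume (Set.Ioo u v) ≠ ⊤ := fun u v => by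
      rw [Real.volume_Ioo]; exact ENNReal.ofReal_ne_top
    have hJfin : ∀ j, volume (J j) ≠ ⊤ := fun j =>
      ne_top_of_le_ne_top (hIooFin _ _) (measure_mono (hJsub j))
    -- slice identities
    have sliceI := mySlice (fun j => Set.Ioo (a j) (b j)) (fun j => measurableSet_Ioo) G hGm
    have sliceJ := mySlice J hJm G hGm
    -- Step 1
    have step1 : ENNReal.ofReal (κ 0 ^ p) * volume (J 0) *
        ∫⁻ t in Set.Ioo (a 0) (b 0),
          ∫⁻ y in Set.univ.pi (fun j => Set.Ioo (a j.succ) (b j.succ)), G (Fin.cons t y)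
        ≤ volume (Set.Ioo (a 0) (b 0)) *
        ∫⁻ t in J 0,
          ∫⁻ y in Set.univ.pi (fun j => Set.Ioo (a j.succ) (b j.succ)), G (Fin.cons t y) := by
      rw [hswap, hswap]
      have hc : ENNReal.ofReal (κ 0 ^ p) * volume (J 0) ≠ ⊤ :=
        ENNReal.mul_ne_top ENNReal.ofReal_ne_top (hJfin 0)
      calc ENNReal.ofReal (κ 0 ^ p) * volume (J 0) *
            ∫⁻ y in Set.univ.pi (fun j => Set.Ioo (a j.succ) (b j.succ)),
              ∫⁻ t in Set.Ioo (a 0) (b 0), G (Fin.cons t y)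
          = ∫⁻ y in Set.univ.pi (fun j => Set.Ioo (a j.succ) (b j.succ)),
              ENNReal.ofReal (κ 0 ^ p) * volume (J 0) *
                ∫⁻ t in Set.Ioo (a 0) (b 0), G (Fin.cons t y) :=
            (lintegral_const_mul' _ _ hc).symm
        _ ≤ ∫⁻ y in Set.univ.pi (fun j => Set.Ioo (a j.succ) (b j.succ)),
              volume (Set.Ioo (a 0) (b 0)) * ∫⁻ t in J 0, G (Fin.cons t y) := by
            refine lintegral_mono fun y => ?_
            have hid : ∀ S : Set ℝ, ∫⁻ t in S, G (Fin.cons t y)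
                = ∫⁻ t in S, ENNReal.ofReal
                  (‖∑ z ∈ Z 0, (∑ k' ∈ Fintype.piFinset (fun j => Z j.succ),
                    c (Fin.cons z k') * Complex.exp (Complex.I * ((∑ j, k' j * y j : ℝ) : ℂ))) *
                      Complex.exp (Complex.I * (z:ℂ) * (t:ℂ))‖ ^ p) := by
              intro S
              refine lintegral_congr fun tt => ?_
              rw [hGdef]
              simp only
              rw [myId1 Z c tt y]
            rw [hid, hid]
            exact h1 0 _
        _ = volume (Set.Ioo (a 0) (b 0)) *
              ∫⁻ y in Set.univ.pi (fun j => Set.Ioo (a j.succ) (b j.succ)),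
                ∫⁻ t in J 0, G (Fin.cons t y) :=
            lintegral_const_mul' _ _ (hIooFin _ _)
    -- Step 2
    have hKTfin : (∏ j : Fin n, ENNReal.ofReal (κ j.succ ^ p)) ≠ ⊤ :=
      (ENNReal.prod_lt_top fun j _ => ENNReal.ofReal_lt_top).ne
    have hvJTfin : (∏ j : Fin n, volume (J j.succ)) ≠ ⊤ :=
      (ENNReal.prod_lt_top fun j _ => (hJfin j.succ).lt_top).ne
    have hvITfin : (∏ j : Fin n, volume (Set.Ioo (a j.succ) (b j.succ))) ≠ ⊤ :=
      (ENNReal.prod_lt_top fun j _ => (hIooFin _ _).lt_top).ne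
    have step2 : (∏ j : Fin n, ENNReal.ofReal (κ j.succ ^ p)) *
        (∏ j : Fin n, volume (J j.succ)) *
        ∫⁻ t in J 0,
          ∫⁻ y in Set.univ.pi (fun j => Set.Ioo (a j.succ) (b j.succ)), G (Fin.cons t y)
        ≤ (∏ j : Fin n, volume (Set.Ioo (a j.succ) (b j.succ))) *
        ∫⁻ t in J 0, ∫⁻ y in Set.univ.pi (fun j => J j.succ), G (Fin.cons t y) := by
      have hc2 : (∏ j : Fin n, ENNReal.ofReal (κ j.succ ^ p)) *
          (∏ j : Fin n, volume (J j.succ)) ≠ ⊤ := ENNReal.mul_ne_top hKTfin hvJTfin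
      calc (∏ j : Fin n, ENNReal.ofReal (κ j.succ ^ p)) * (∏ j : Fin n, volume (J j.succ)) *
            ∫⁻ t in J 0,
              ∫⁻ y in Set.univ.pi (fun j => Set.Ioo (a j.succ) (b j.succ)), G (Fin.cons t y)
          = ∫⁻ t in J 0,
              (∏ j : Fin n, ENNReal.ofReal (κ j.succ ^ p)) * (∏ j : Fin n, volume (J j.succ)) *
                ∫⁻ y in Set.univ.pi (fun j => Set.Ioo (a j.succ) (b j.succ)), G (Fin.cons t y) :=
            (lintegral_const_mul' _ _ hc2).symm
        _ ≤ ∫⁻ t in J 0,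
              (∏ j : Fin n, volume (Set.Ioo (a j.succ) (b j.succ))) *
                ∫⁻ y in Set.univ.pi (fun j => J j.succ), G (Fin.cons t y) := by
            refine lintegral_mono fun t => ?_
            have hid : ∀ S : Fin n → Set ℝ, ∫⁻ y in Set.univ.pi S, G (Fin.cons t y)
                = ∫⁻ y in Set.univ.pi S, ENNReal.ofReal
                  (‖∑ k' ∈ Fintype.piFinset (fun j => Z j.succ),
                    (∑ z ∈ Z 0, c (Fin.cons z k') *
                      Complex.exp (Complex.I * (z:ℂ) * (t:ℂ))) *
                        Complex.exp (Complex.I * ((∑ j, k' j * y j : ℝ) : ℂ))‖ ^ p) := by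
              intro S
              refine lintegral_congr fun y => ?_
              rw [hGdef]
              simp only
              rw [myId2 Z c t y]
            rw [hid, hid]
            exact ih (fun j => a j.succ) (fun j => b j.succ) (fun j => J j.succ)
              (fun j => Z j.succ) (fun j => κ j.succ)
              (fun k' => ∑ z ∈ Z 0, c (Fin.cons z k') *
                Complex.exp (Complex.I * (z:ℂ) * (t:ℂ)))
              (fun j => hJm j.succ) (fun j => hJsub j.succ) (fun j => hκ j.succ)
              (fun j bc => h1 j.succ bc)
        _ = (∏ j : Fin n, volume (Set.Ioo (a j.succ) (b j.succ))) *
              ∫⁻ t in J 0, ∫⁻ y in Set.univ.pi (fun j => J j.succ), G (Fin.cons t y) :=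
            lintegral_const_mul' _ _ hvITfin
    -- assemble
    rw [sliceI, sliceJ, Fin.prod_univ_succ (fun j => ENNReal.ofReal (κ j ^ p)),
      Fin.prod_univ_succ (fun j => volume (J j)),
      Fin.prod_univ_succ (fun j => volume (Set.Ioo (a j) (b j)))]
    calc ENNReal.ofReal (κ 0 ^ p) * (∏ j : Fin n, ENNReal.ofReal (κ j.succ ^ p)) *
          (volume (J 0) * ∏ j : Fin n, volume (J j.succ)) *
          ∫⁻ t in Set.Ioo (a 0) (b 0),
            ∫⁻ y in Set.univ.pi (fun j => Set.Ioo (a j.succ) (b j.succ)), G (Fin.cons t y)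
        = (∏ j : Fin n, ENNReal.ofReal (κ j.succ ^ p)) * (∏ j : Fin n, volume (J j.succ)) *
          (ENNReal.ofReal (κ 0 ^ p) * volume (J 0) *
            ∫⁻ t in Set.Ioo (a 0) (b 0),
              ∫⁻ y in Set.univ.pi (fun j => Set.Ioo (a j.succ) (b j.succ)), G (Fin.cons t y)) := by
          ring
      _ ≤ (∏ j : Fin n, ENNReal.ofReal (κ j.succ ^ p)) * (∏ j : Fin n, volume (J j.succ)) *
          (volume (Set.Ioo (a 0) (b 0)) *
            ∫⁻ t in J 0,
              ∫⁻ y in Set.univ.pi (fun j => Set.Ioo (a j.succ) (b j.succ)), G (Fin.cons t y)) :=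
          mul_le_mul_right step1 _
      _ = volume (Set.Ioo (a 0) (b 0)) *
          ((∏ j : Fin n, ENNReal.ofReal (κ j.succ ^ p)) * (∏ j : Fin n, volume (J j.succ)) *
            ∫⁻ t in J 0,
              ∫⁻ y in Set.univ.pi (fun j => Set.Ioo (a j.succ) (b j.succ)), G (Fin.cons t y)) := by
          ring
      _ ≤ volume (Set.Ioo (a 0) (b 0)) *
          ((∏ j : Fin n, volume (Set.Ioo (a j.succ) (b j.succ))) *
            ∫⁻ t in J 0, ∫⁻ y in Set.univ.pi (fun j => J j.succ), G (Fin.cons t y)) :=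
          mul_le_mul_right step2 _
      _ = volume (Set.Ioo (a 0) (b 0)) *
          (∏ j : Fin n, volume (Set.Ioo (a j.succ) (b j.succ))) *
          ∫⁻ t in J 0, ∫⁻ y in Set.univ.pi (fun j => J j.succ), G (Fin.cons t y) := by
          ring

end NTaux

/-- Tensorized Nazarov–Turán inequality: if in each coordinate every univariate
exponential sum with frequencies in `Z j` satisfies
`(⨍_{J_j}|h|^p)^{1/p} ≥ κ_j (⨍_{I_j}|h|^p)^{1/p}`, then every
`f(x) = ∑_{k ∈ ∏ Z_j} c_k e^{ik·x}` satisfies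
`(⨍_E |f|^p)^{1/p} ≥ (∏ κ_j)(⨍_Q |f|^p)^{1/p}` with `Q = ∏ I_j`, `E = ∏ J_j`. -/
theorem stmt17 (d : ℕ) (hd : 1 ≤ d) (p : ℝ) (hp : 0 < p)
    (a b : Fin d → ℝ) (hab : ∀ j, a j < b j)
    (J : Fin d → Set ℝ) (hJm : ∀ j, MeasurableSet (J j))
    (hJsub : ∀ j, J j ⊆ Set.Ioo (a j) (b j)) (hJpos : ∀ j, 0 < volume (J j))
    (Z : Fin d → Finset ℝ) (hZ : ∀ j, (Z j).Nonempty)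
    (κ : Fin d → ℝ) (hκ : ∀ j, κ j ∈ Set.Ioc (0 : ℝ) 1)
    (h1 : ∀ j, ∀ bc : ℝ → ℂ,
      κ j * (⨍ t in Set.Ioo (a j) (b j),
          ‖∑ z ∈ Z j, bc z * Complex.exp (Complex.I * (z : ℂ) * (t : ℂ))‖ ^ p) ^ (1 / p) ≤
        (⨍ t in J j,
          ‖∑ z ∈ Z j, bc z * Complex.exp (Complex.I * (z : ℂ) * (t : ℂ))‖ ^ p) ^ (1 / p))
    (c : (Fin d → ℝ) → ℂ) :
    (∏ j, κ j) *
      (⨍ x in Set.univ.pi (fun j => Set.Ioo (a j) (b j)),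
        ‖∑ k ∈ Fintype.piFinset Z, c k *
          Complex.exp (Complex.I * ((∑ j, k j * x j : ℝ) : ℂ))‖ ^ p) ^ (1 / p) ≤
      (⨍ x in Set.univ.pi J,
        ‖∑ k ∈ Fintype.piFinset Z, c k *
          Complex.exp (Complex.I * ((∑ j, k j * x j : ℝ) : ℂ))‖ ^ p) ^ (1 / p) := by
  have hIoo0 : ∀ j : Fin d, volume (Set.Ioo (a j) (b j)) ≠ 0 := by
    intro j
    rw [Real.volume_Ioo]
    simp [ENNReal.ofReal_eq_zero, not_le, sub_pos, hab j]
  have hIooFin : ∀ j : Fin d, volume (Set.Ioo (a j) (b j)) ≠ ⊤ := fun j => by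
    rw [Real.volume_Ioo]; exact ENNReal.ofReal_ne_top
  have hvolI : volume (Set.univ.pi fun j => Set.Ioo (a j) (b j))
      = ∏ j, volume (Set.Ioo (a j) (b j)) := volume_pi_pi _
  have hvolJ : volume (Set.univ.pi J) = ∏ j, volume (J j) := volume_pi_pi _
  have hpiJsub : Set.univ.pi J ⊆ Set.Icc a b := by
    intro x hx
    have hm : ∀ j, x j ∈ Set.Ioo (a j) (b j) := fun j => hJsub j (hx j (Set.mem_univ j))
    exact Set.mem_Icc.2 ⟨fun j => (hm j).1.le, fun j => (hm j).2.le⟩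
  have hIccFin : volume (Set.Icc a b) ≠ ⊤ := isCompact_Icc.measure_lt_top.ne
  -- convert univariate hypotheses to ENNReal form
  have h1' : ∀ j, ∀ bc : ℝ → ℂ,
      ENNReal.ofReal (κ j ^ p) * volume (J j) *
          ∫⁻ t in Set.Ioo (a j) (b j),
            ENNReal.ofReal (‖∑ z ∈ Z j, bc z * Complex.exp (Complex.I * (z:ℂ) * (t:ℂ))‖ ^ p)
        ≤ volume (Set.Ioo (a j) (b j)) *
          ∫⁻ t in J j,
            ENNReal.ofReal (‖∑ z ∈ Z j, bc z * Complex.exp (Complex.I * (z:ℂ) * (t:ℂ))‖ ^ p) := by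
    intro j bc
    refine myToENN hp (hκ j).1 (fun t => Real.rpow_nonneg (norm_nonneg _) p)
      ((myCont1 (Z j) bc hp).aestronglyMeasurable.restrict)
      ((myCont1 (Z j) bc hp).aestronglyMeasurable.restrict)
      (hIoo0 j) (hIooFin j) (hJpos j).ne' (ne_top_of_le_ne_top (hIooFin j)
        (measure_mono (hJsub j)))
      (myFinGen isCompact_Icc (isCompact_Icc.measure_lt_top.ne)
        Set.Ioo_subset_Icc_self measurableSet_Ioo (myCont1 (Z j) bc hp))
      (myFinGen isCompact_Icc (isCompact_Icc.measure_lt_top.ne)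
        ((hJsub j).trans Set.Ioo_subset_Icc_self) (hJm j) (myCont1 (Z j) bc hp))
      (h1 j bc)
  have hmain := myKey p hp d a b J Z κ c hJm hJsub (fun j => (hκ j).1) h1'
  refine myFromENN hp (Finset.prod_pos fun j _ => (hκ j).1)
    (fun x => Real.rpow_nonneg (norm_nonneg _) p)
    ((myCont Z c hp).aestronglyMeasurable.restrict)
    ((myCont Z c hp).aestronglyMeasurable.restrict)
    (by rw [hvolI]; exact Finset.prod_ne_zero_iff.2 fun j _ => hIoo0 j)
    (by rw [hvolI]; exact (ENNReal.prod_lt_top fun j _ => (hIooFin j).lt_top).ne)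
    (by rw [hvolJ]; exact Finset.prod_ne_zero_iff.2 fun j _ => (hJpos j).ne')
    (ne_top_of_le_ne_top hIccFin (measure_mono hpiJsub))
    (myFinGen isCompact_Icc hIccFin hpiJsub (MeasurableSet.univ_pi hJm) (myCont Z c hp))
    ?_
  rw [show ((∏ j, κ j) ^ p : ℝ) = ∏ j, κ j ^ p from
      (Real.finset_prod_rpow _ _ (fun j _ => (hκ j).1.le) p).symm,
    ENNReal.ofReal_prod_of_nonneg (fun j _ => Real.rpow_nonneg (hκ j).1.le p),
    hvolI, hvolJ]
  exact hmain
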